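/- In the $n$-fold multisimplicial Loday complex $\mathcal{L}^{\mathbb{Q}}_{T^n}(\mathbb{Q}[t];\mathbb{Q})$, let $\mathbf{a}, \mathbf{b}$ be coordinates in multidegree $\mathbf{1}_{n-1}$ and $x, y \in \mathbb{Q}[t]$. Then the cycles $x_{(\mathbf{a},1)}\cdot y_{(\mathbf{b},1)}$ and $x_{(\mathbf{a},0)}\cdot y_{(\mathbf{b},1)} + x_{(\mathbf{a},1)}\cdot y_{(\mathbf{b},0)}$ in multidegree $\mathbf{1}_n$ are homologous: their difference is the total differential of $x_{(\mathbf{a},1)}\cdot y_{(\mathbf{b},2)}$ in multidegree $(\mathbf{1}_{n-1},2)$ (Split Moving Lemma). -/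

import Mathlib

/-!
The multisimplicial Loday complex `𝓛^ℚ_{Tⁿ}(ℚ[t]; ℚ)` of the `n`-torus with reduced
coefficients, in the multidegrees needed for the moving lemmas.

A chain in multidegree `𝟏ₙ + eᵢ`-or-lower is a `ℚ`-linear combination of monomial
multi-matrices with entries powers of `t` (entry `ℚ` at the basepoint coordinate `𝟎ₙ`);
such a monomial is recorded by its exponent multi-matrix, a finitely supported function
`e : (Fin n → ℕ) → ℕ` (the exponent of `t` at each coordinate) with `e 𝟎 = 0`.  Chains
form the monoid algebra `Ch n` of these exponent matrices (multiplication of monomials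
adds exponents coordinatewise, matching multiplication of multi-matrices).  `elem v x` is
the multi-matrix `x_𝐯` with `x ∈ ℚ[t]` at coordinate `𝐯` and `1` elsewhere (so
`elem 𝟎 t = 0`: `t` acts as `0` on the coefficient copy of `ℚ`).  `D i j` is the `j`-th
face map of the simplicial circle in the `i`-th direction (for circle-degree `2 → 1`),
`del i = D i 0 - D i 1 + D i 2` the corresponding differential, `Deg b` the chains of
multidegree (entrywise) at most `b`, and `Homologous x y` says the difference `x - y` is
a boundary coming from total multidegree `n + 1`, i.e. from the multidegrees `𝟏ₙ + eᵢ`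
(in the directions `i'` with multidegree `1` the cyclic differentials vanish).
-/

/-- Coordinates of a multi-matrix. -/
abbrev Coord (n : ℕ) := Fin n → ℕ

/-- Exponent multi-matrices: the exponent at the basepoint coordinate `𝟎` is `0`. -/
noncomputable def ExpM (n : ℕ) : AddSubmonoid ((Coord n) →₀ ℕ) where
  carrier := {e | e 0 = 0}
  add_mem' := by intro a b ha hb; simp_all
  zero_mem' := by simp

/-- Chains of the (reduced-coefficient) multisimplicial Loday complex of `ℚ[t]`. -/
abbrev Ch (n : ℕ) := AddMonoidAlgebra ℚ (ExpM n)

/-- The monomial with a single `t` at coordinate `v` (zero if `v` is the basepoint,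
since `t` acts as `0` on the coefficients `ℚ`). -/
noncomputable def tv {n : ℕ} (v : Coord n) : Ch n :=
  if h : v = 0 then 0
  else AddMonoidAlgebra.single ⟨Finsupp.single v 1, Finsupp.single_eq_of_ne (Ne.symm h)⟩ 1

/-- `elem v x = x_𝐯`: the multi-matrix with `x ∈ ℚ[t]` at coordinate `v`, `1` elsewhere. -/
noncomputable def elem {n : ℕ} (v : Coord n) (x : Polynomial ℚ) : Ch n :=
  Polynomial.aeval (tv v) x

/-- The `j`-th face map of the simplicial circle `S¹` from simplicial degree `2` to
degree `1`, on coordinates `{0,1,2} → {0,1}` (`0` the basepoint). -/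
def cface (j c : ℕ) : ℕ := (if 3 ≤ j + c then c - 1 else c) % 2

/-- The `j`-th face in direction `i` on coordinates. -/
def phi {n : ℕ} (i : Fin n) (j : ℕ) (c : Coord n) : Coord n :=
  Function.update c i (cface j (c i))

/-- Face of a monomial: push exponents forward along `phi i j` (adding exponents that
land at the same coordinate = multiplying the entries over each fiber); if a positive
exponent lands on the basepoint the result is `0` (reduced coefficients). -/
noncomputable def Dsingle {n : ℕ} (i : Fin n) (j : ℕ) (e : ExpM n) : Ch n :=
  if h : (Finsupp.mapDomain (phi i j) (e : Coord n →₀ ℕ)) 0 = 0 then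
    AddMonoidAlgebra.single ⟨Finsupp.mapDomain (phi i j) (e : Coord n →₀ ℕ), h⟩ 1
  else 0

/-- The `j`-th face map in direction `i`, extended linearly to chains. -/
noncomputable def D {n : ℕ} (i : Fin n) (j : ℕ) (a : Ch n) : Ch n :=
  Finsupp.sum a.coeff fun e q => q • Dsingle i j e

/-- The simplicial differential in direction `i` (from multidegree `𝟏ₙ + eᵢ`). -/
noncomputable def del {n : ℕ} (i : Fin n) (a : Ch n) : Ch n :=
  D i 0 a - D i 1 a + D i 2 a

/-- The monomial `e` lies in the box of multidegree `b`. -/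
def inBox {n : ℕ} (b : Coord n) (e : ExpM n) : Prop :=
  ∀ c ∈ (e : Coord n →₀ ℕ).support, ∀ i, c i ≤ b i

/-- Chains of multidegree (entrywise at most) `b`. -/
noncomputable def Deg {n : ℕ} (b : Coord n) : Submodule ℚ (Ch n) :=
  Submodule.span ℚ {x | ∃ e : ExpM n, inBox b e ∧ x = AddMonoidAlgebra.single e 1}

/-- Boundaries in multidegree `𝟏ₙ`: images of the total differential on chains of the
multidegrees `𝟏ₙ + eᵢ` (in directions of multidegree `1` the cyclic differentials
vanish, so the total differential is `± del i` there). -/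
noncomputable def bdry (n : ℕ) : Submodule ℚ (Ch n) :=
  Submodule.span ℚ {x | ∃ (i : Fin n) (z : Ch n),
    z ∈ Deg (Function.update (fun _ => 1) i 2) ∧ x = del i z}

/-- Two chains of multidegree `𝟏ₙ` are homologous if their difference is a boundary. -/
def Homologous {n : ℕ} (x y : Ch n) : Prop := x - y ∈ bdry n

/-! ### Auxiliary lemmas -/

section Aux

variable {n : ℕ}

lemma Dsingle_zero (i : Fin n) (j : ℕ) : Dsingle i j 0 = 1 := by
  unfold Dsingle
  have h0 : ((0 : ExpM n) : Coord n →₀ ℕ) = 0 := rfl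
  rw [h0, Finsupp.mapDomain_zero]
  simp [AddMonoidAlgebra.one_def]
  rfl

lemma Dsingle_add (i : Fin n) (j : ℕ) (e f : ExpM n) :
    Dsingle i j (e + f) = Dsingle i j e * Dsingle i j f := by
  unfold Dsingle
  have hco : ((e + f : ExpM n) : Coord n →₀ ℕ) = (e : Coord n →₀ ℕ) + f := rfl
  rw [hco, Finsupp.mapDomain_add]
  by_cases he : (Finsupp.mapDomain (phi i j) (e : Coord n →₀ ℕ)) 0 = 0 <;>
    by_cases hf : (Finsupp.mapDomain (phi i j) (f : Coord n →₀ ℕ)) 0 = 0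
  · rw [dif_pos he, dif_pos hf, dif_pos (by simp [Finsupp.add_apply, he, hf]),
      AddMonoidAlgebra.single_mul_single, one_mul]
    rfl
  · rw [dif_pos he, dif_neg hf, dif_neg (by simp [Finsupp.add_apply, he, hf]), mul_zero]
  · rw [dif_neg he, dif_pos hf, dif_neg (by simp [Finsupp.add_apply, he, hf]), zero_mul]
  · rw [dif_neg he, dif_neg hf, dif_neg (by simp [Finsupp.add_apply, he, hf]), zero_mul]

/-- The face as a monoid homomorphism on exponent matrices. -/
noncomputable def DmonHom (i : Fin n) (j : ℕ) : Multiplicative (ExpM n) →* Ch n where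
  toFun e := Dsingle i j (Multiplicative.toAdd e)
  map_one' := Dsingle_zero i j
  map_mul' e f := Dsingle_add i j _ _

/-- The face as an algebra homomorphism on chains. -/
noncomputable def DAlg (i : Fin n) (j : ℕ) : Ch n →ₐ[ℚ] Ch n :=
  AddMonoidAlgebra.lift ℚ (Ch n) (ExpM n) (DmonHom i j)

lemma D_eq_DAlg (i : Fin n) (j : ℕ) (p : Ch n) : D i j p = DAlg i j p := by
  rw [DAlg, AddMonoidAlgebra.lift_apply]
  rfl

lemma cface_zero (j : ℕ) : cface j 0 = 0 := by
  unfold cface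
  rcases le_or_gt 3 (j + 0) with h | h <;> simp [h]

lemma phi_zero (i : Fin n) (j : ℕ) : phi i j 0 = 0 := by
  have : cface j ((0 : Coord n) i) = (0 : Coord n) i := by
    show cface j 0 = 0
    exact cface_zero j
  rw [phi, this, Function.update_eq_self]

lemma D_tv (i : Fin n) (j : ℕ) (v : Coord n) : D i j (tv v) = tv (phi i j v) := by
  by_cases hv : v = 0
  · subst hv
    rw [phi_zero]
    simp [tv, D]
  · rw [tv, dif_neg hv, D, AddMonoidAlgebra.coeff_single]
    rw [Finsupp.sum_single_index (by simp)]
    rw [one_smul, Dsingle]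
    have hmap : Finsupp.mapDomain (phi i j)
        ((⟨Finsupp.single v 1, Finsupp.single_eq_of_ne (Ne.symm hv)⟩ : ExpM n) : Coord n →₀ ℕ)
        = Finsupp.single (phi i j v) 1 := Finsupp.mapDomain_single
    by_cases hp : phi i j v = 0
    · rw [dif_neg (by rw [hmap, hp]; simp), tv, dif_pos hp]
    · rw [dif_pos (by rw [hmap]; exact Finsupp.single_eq_of_ne (Ne.symm hp)), tv, dif_neg hp]
      congr 1
      exact Subtype.ext hmap

lemma D_elem (i : Fin n) (j : ℕ) (v : Coord n) (x : Polynomial ℚ) :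
    D i j (elem v x) = elem (phi i j v) x := by
  rw [elem, elem, D_eq_DAlg, ← Polynomial.aeval_algHom_apply, ← D_eq_DAlg, D_tv]

lemma D_mul (i : Fin n) (j : ℕ) (p q : Ch n) :
    D i j (p * q) = D i j p * D i j q := by
  simp [D_eq_DAlg, map_mul]

lemma one_mem_deg (b : Coord n) : (1 : Ch n) ∈ Deg b := by
  apply Submodule.subset_span
  refine ⟨0, fun c hc i => ?_, rfl⟩
  have h0 : ((0 : ExpM n) : Coord n →₀ ℕ) = 0 := rfl
  rw [h0] at hc
  simp at hc

lemma mul_mem_deg {b : Coord n} {p q : Ch n} (hp : p ∈ Deg b) (hq : q ∈ Deg b) :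
    p * q ∈ Deg b := by
  rw [Deg] at hp hq ⊢
  have h := Submodule.mul_mem_mul hp hq
  rw [Submodule.span_mul_span] at h
  refine Submodule.span_le.2 ?_ h
  rintro _ ⟨_, ⟨e, he, rfl⟩, _, ⟨f, hf, rfl⟩, rfl⟩
  apply Submodule.subset_span
  refine ⟨e + f, fun c hc i => ?_, by simp [AddMonoidAlgebra.single_mul_single]⟩
  have hco : ((e + f : ExpM n) : Coord n →₀ ℕ) = (e : Coord n →₀ ℕ) + f := rfl
  rw [hco] at hc
  rcases Finset.mem_union.1 (Finsupp.support_add hc) with h' | h'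
  · exact he c h' i
  · exact hf c h' i

lemma tv_mem_deg {b v : Coord n} (hv : ∀ i, v i ≤ b i) : tv v ∈ Deg b := by
  by_cases h : v = 0
  · rw [tv, dif_pos h]; exact Submodule.zero_mem _
  · rw [tv, dif_neg h]
    apply Submodule.subset_span
    refine ⟨_, fun c hc i => ?_, rfl⟩
    have : c = v := by
      have := Finsupp.support_single_subset hc
      simpa using this
    rw [this]; exact hv i

lemma elem_mem_deg {b v : Coord n} (hv : ∀ i, v i ≤ b i) (x : Polynomial ℚ) :
    elem v x ∈ Deg b := by
  rw [elem]
  induction x using Polynomial.induction_on' with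
  | add p q hp hq => rw [map_add]; exact Submodule.add_mem _ hp hq
  | monomial k c =>
    rw [Polynomial.aeval_monomial]
    refine mul_mem_deg ?_ ?_
    · rw [Algebra.algebraMap_eq_smul_one]
      exact Submodule.smul_mem _ _ (one_mem_deg b)
    · induction k with
      | zero => rw [pow_zero]; exact one_mem_deg b
      | succ m ih => rw [pow_succ]; exact mul_mem_deg ih (tv_mem_deg hv)

lemma phi_last_snoc (c : Fin n → ℕ) (k j : ℕ) :
    phi (Fin.last n) j (Fin.snoc c k) = Fin.snoc c (cface j k) := by
  funext m
  rw [phi]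
  refine Fin.lastCases ?_ (fun i => ?_) m
  · rw [Function.update_self, Fin.snoc_last, Fin.snoc_last]
  · rw [Function.update_of_ne (Fin.castSucc_lt_last i).ne, Fin.snoc_castSucc,
      Fin.snoc_castSucc]

end Aux

/-!
STATEMENT 12 (Split Moving Lemma): in `𝓛^ℚ_{T^{n+1}}(ℚ[t]; ℚ)`, for coordinates
`𝐚, 𝐛 ∈ {0,1}ⁿ` and `x, y ∈ ℚ[t]`, the multidegree-`𝟏_{n+1}` cycles
`x_{(𝐚,1)}·y_{(𝐛,1)}` and `x_{(𝐚,0)}·y_{(𝐛,1)} + x_{(𝐚,1)}·y_{(𝐛,0)}` are homologous: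
their difference is (up to the total-complex sign `(-1)^{v₁+⋯+v_n}`) the boundary
`(d₀ - d₁ + d₂)` in the last direction of `x_{(𝐚,1)}·y_{(𝐛,2)}`, an element of
multidegree `(𝟏ₙ, 2)`:
`d(x_{(𝐚,1)}·y_{(𝐛,2)}) = x_{(𝐚,0)}·y_{(𝐛,1)} - x_{(𝐚,1)}·y_{(𝐛,1)} + x_{(𝐚,1)}·y_{(𝐛,0)}`.
-/

theorem split_moving_lemma (n : ℕ) (a b : Fin n → Fin 2) (x y : Polynomial ℚ) :
    Homologous
      (elem (Fin.snoc (fun i => (a i : ℕ)) 1) x * elem (Fin.snoc (fun i => (b i : ℕ)) 1) y)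
      (elem (Fin.snoc (fun i => (a i : ℕ)) 0) x * elem (Fin.snoc (fun i => (b i : ℕ)) 1) y
        + elem (Fin.snoc (fun i => (a i : ℕ)) 1) x * elem (Fin.snoc (fun i => (b i : ℕ)) 0) y)
    ∧
    elem (Fin.snoc (fun i => (a i : ℕ)) 0) x * elem (Fin.snoc (fun i => (b i : ℕ)) 1) y
      - elem (Fin.snoc (fun i => (a i : ℕ)) 1) x * elem (Fin.snoc (fun i => (b i : ℕ)) 1) y
      + elem (Fin.snoc (fun i => (a i : ℕ)) 1) x * elem (Fin.snoc (fun i => (b i : ℕ)) 0) y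
      = del (Fin.last n)
          (elem (Fin.snoc (fun i => (a i : ℕ)) 1) x *
            elem (Fin.snoc (fun i => (b i : ℕ)) 2) y) := by
  have c01 : cface 0 1 = 1 := by decide
  have c11 : cface 1 1 = 1 := by decide
  have c21 : cface 2 1 = 0 := by decide
  have c02 : cface 0 2 = 0 := by decide
  have c12 : cface 1 2 = 1 := by decide
  have c22 : cface 2 2 = 1 := by decide
  have key : elem (Fin.snoc (fun i => (a i : ℕ)) 0) x * elem (Fin.snoc (fun i => (b i : ℕ)) 1) y
      - elem (Fin.snoc (fun i => (a i : ℕ)) 1) x * elem (Fin.snoc (fun i => (b i : ℕ)) 1) y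
      + elem (Fin.snoc (fun i => (a i : ℕ)) 1) x * elem (Fin.snoc (fun i => (b i : ℕ)) 0) y
      = del (Fin.last n)
          (elem (Fin.snoc (fun i => (a i : ℕ)) 1) x *
            elem (Fin.snoc (fun i => (b i : ℕ)) 2) y) := by
    rw [del, D_mul, D_mul, D_mul, D_elem, D_elem, D_elem, D_elem, D_elem, D_elem,
      phi_last_snoc, phi_last_snoc, phi_last_snoc, phi_last_snoc, phi_last_snoc,
      phi_last_snoc, c01, c11, c21, c02, c12, c22]
    abel
  have hz : elem (Fin.snoc (fun i => (a i : ℕ)) 1) x *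
        elem (Fin.snoc (fun i => (b i : ℕ)) 2) y
      ∈ Deg (Function.update (fun _ => 1) (Fin.last n) 2) := by
    refine mul_mem_deg (elem_mem_deg ?_ x) (elem_mem_deg ?_ y)
    · intro m
      refine Fin.lastCases ?_ (fun i => ?_) m
      · rw [Fin.snoc_last, Function.update_self]; exact one_le_two
      · rw [Fin.snoc_castSucc, Function.update_of_ne (Fin.castSucc_lt_last i).ne]
        exact Fin.is_le (a i)
    · intro m
      refine Fin.lastCases ?_ (fun i => ?_) m
      · rw [Fin.snoc_last, Function.update_self]
      · rw [Fin.snoc_castSucc, Function.update_of_ne (Fin.castSucc_lt_last i).ne]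
        exact Fin.is_le (b i)
  have hb : del (Fin.last n)
        (elem (Fin.snoc (fun i => (a i : ℕ)) 1) x *
          elem (Fin.snoc (fun i => (b i : ℕ)) 2) y) ∈ bdry (n + 1) :=
    Submodule.subset_span ⟨Fin.last n, _, hz, rfl⟩
  refine ⟨?_, key⟩
  rw [Homologous]
  have hdiff : elem (Fin.snoc (fun i => (a i : ℕ)) 1) x *
        elem (Fin.snoc (fun i => (b i : ℕ)) 1) y
      - (elem (Fin.snoc (fun i => (a i : ℕ)) 0) x * elem (Fin.snoc (fun i => (b i : ℕ)) 1) y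
        + elem (Fin.snoc (fun i => (a i : ℕ)) 1) x * elem (Fin.snoc (fun i => (b i : ℕ)) 0) y)
      = -(del (Fin.last n)
          (elem (Fin.snoc (fun i => (a i : ℕ)) 1) x *
            elem (Fin.snoc (fun i => (b i : ℕ)) 2) y)) := by
    rw [← key]; abel
  rw [hdiff]
  exact Submodule.neg_mem _ hb
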